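/- Let 𝔽 be a field and let λ : ℤ^n × ℤ^n → 𝔽∖{0} be an alternating bicharacter whose value group Λ (the subgroup of 𝔽* generated by all λ(γ,γ')) is torsion-free. Let Z = {γ ∈ ℤ^n : λ(γ,γ') = 1 for all γ' ∈ ℤ^n} be the radical of λ. Then the rank of Λ is at most C(n − rank(Z), 2) = (n − rank(Z))(n − rank(Z) − 1)/2. -/

import Mathlib

section bichar
variable {F : Type*} [Field F] {n : ℕ} {lam : (Fin n → ℤ) → (Fin n → ℤ) → Fˣ}

lemma lam_zero₁ (hadd₁ : ∀ γ δ γ' : Fin n → ℤ, lam (γ + δ) γ' = lam γ γ' * lam δ γ')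
    (γ' : Fin n → ℤ) : lam 0 γ' = 1 := by
  have h := hadd₁ 0 0 γ'
  rw [add_zero] at h
  exact (left_eq_mul.mp h)

lemma lam_zero₂ (hadd₂ : ∀ γ γ' δ' : Fin n → ℤ, lam γ (γ' + δ') = lam γ γ' * lam γ δ')
    (γ : Fin n → ℤ) : lam γ 0 = 1 := by
  have h := hadd₂ γ 0 0
  rw [add_zero] at h
  exact (left_eq_mul.mp h)

lemma lam_neg₁ (hadd₁ : ∀ γ δ γ' : Fin n → ℤ, lam (γ + δ) γ' = lam γ γ' * lam δ γ')
    (γ γ' : Fin n → ℤ) : lam (-γ) γ' = (lam γ γ')⁻¹ := by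
  have h := hadd₁ γ (-γ) γ'
  rw [add_neg_cancel, lam_zero₁ hadd₁] at h
  exact (inv_eq_of_mul_eq_one_right h.symm).symm

lemma lam_zsmul₁ (hadd₁ : ∀ γ δ γ' : Fin n → ℤ, lam (γ + δ) γ' = lam γ γ' * lam δ γ')
    (c : ℤ) (γ γ' : Fin n → ℤ) : lam (c • γ) γ' = lam γ γ' ^ c := by
  induction c using Int.induction_on with
  | zero => simpa using lam_zero₁ hadd₁ γ'
  | succ i ih =>
      have : ((i : ℤ) + 1) • γ = (i : ℤ) • γ + γ := by rw [add_smul, one_smul]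
      rw [this, hadd₁, ih, zpow_add_one]
  | pred i ih =>
      have : (-(i : ℤ) - 1) • γ = (-(i : ℤ)) • γ + (-γ) := by rw [sub_smul, one_smul, sub_eq_add_neg, neg_smul]
      rw [this, hadd₁, ih, lam_neg₁ hadd₁, zpow_sub_one]

lemma lam_sum₁ (hadd₁ : ∀ γ δ γ' : Fin n → ℤ, lam (γ + δ) γ' = lam γ γ' * lam δ γ')
    {ι : Type*} (t : Finset ι) (v : ι → (Fin n → ℤ)) (γ' : Fin n → ℤ) :
    lam (∑ i ∈ t, v i) γ' = ∏ i ∈ t, lam (v i) γ' := by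
  classical
  induction t using Finset.induction_on with
  | empty => simpa using lam_zero₁ hadd₁ γ'
  | insert _ _ hnotmem ih =>
      rw [Finset.sum_insert hnotmem, Finset.prod_insert hnotmem, hadd₁, ih]

lemma lam_skew (hadd₁ : ∀ γ δ γ' : Fin n → ℤ, lam (γ + δ) γ' = lam γ γ' * lam δ γ')
    (hadd₂ : ∀ γ γ' δ' : Fin n → ℤ, lam γ (γ' + δ') = lam γ γ' * lam γ δ')
    (halt : ∀ γ : Fin n → ℤ, lam γ γ = 1)
    (γ γ' : Fin n → ℤ) : lam γ' γ = (lam γ γ')⁻¹ := by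
  have h := halt (γ + γ')
  rw [hadd₁, hadd₂, hadd₂, halt, halt, one_mul, mul_one] at h
  rw [eq_comm, inv_eq_iff_mul_eq_one]
  exact h

lemma lam_zsmul₂ (hadd₁ : ∀ γ δ γ' : Fin n → ℤ, lam (γ + δ) γ' = lam γ γ' * lam δ γ')
    (hadd₂ : ∀ γ γ' δ' : Fin n → ℤ, lam γ (γ' + δ') = lam γ γ' * lam γ δ')
    (halt : ∀ γ : Fin n → ℤ, lam γ γ = 1)
    (c : ℤ) (γ γ' : Fin n → ℤ) : lam γ (c • γ') = lam γ γ' ^ c := by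
  rw [lam_skew hadd₁ hadd₂ halt (c • γ') γ, lam_zsmul₁ hadd₁, lam_skew hadd₁ hadd₂ halt γ' γ, inv_zpow]

lemma lam_sum₂ (hadd₁ : ∀ γ δ γ' : Fin n → ℤ, lam (γ + δ) γ' = lam γ γ' * lam δ γ')
    (hadd₂ : ∀ γ γ' δ' : Fin n → ℤ, lam γ (γ' + δ') = lam γ γ' * lam γ δ')
    (halt : ∀ γ : Fin n → ℤ, lam γ γ = 1)
    {ι : Type*} (t : Finset ι) (γ : Fin n → ℤ) (v : ι → (Fin n → ℤ)) :
    lam γ (∑ i ∈ t, v i) = ∏ i ∈ t, lam γ (v i) := by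
  rw [lam_skew hadd₁ hadd₂ halt _ γ, lam_sum₁ hadd₁]
  rw [← Finset.prod_inv_distrib]
  exact Finset.prod_congr rfl fun i _ => by rw [lam_skew hadd₁ hadd₂ halt γ (v i), inv_inv]

end bichar

lemma zpow_finset_sum {G : Type*} [CommGroup G] {ι : Type*} (g : G) (t : Finset ι) (e : ι → ℤ) :
    g ^ (∑ i ∈ t, e i) = ∏ i ∈ t, g ^ e i := by
  classical
  induction t using Finset.induction_on with
  | empty => simp
  | insert _ _ hnm ih => rw [Finset.sum_insert hnm, Finset.prod_insert hnm, zpow_add, ih]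

lemma card_lt_pairs (m : ℕ) :
    Fintype.card {p : Fin m × Fin m // p.1 < p.2} = m.choose 2 := by
  classical
  have e : {p : Fin m × Fin m // p.1 < p.2} ≃ Σ j : Fin m, Fin j.1 :=
    { toFun := fun p => ⟨p.1.2, ⟨p.1.1.1, p.2⟩⟩
      invFun := fun q => ⟨(⟨q.2.1, lt_trans q.2.2 q.1.2⟩, q.1), q.2.2⟩
      left_inv := fun p => by ext <;> simp
      right_inv := fun q => by ext <;> simp }
  rw [Fintype.card_congr e, Fintype.card_sigma]
  have h3 : ∑ j : Fin m, Fintype.card (Fin j.1) = ∑ j ∈ Finset.range m, j := by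
    simpa using Fin.sum_univ_eq_sum_range (fun j => j) m
  have h4 := Finset.sum_range_id_mul_two m
  rw [h3, Nat.choose_two_right]
  omega

lemma prod_pairs_fold {G : Type*} [CommGroup G] {m : ℕ} (f : Fin m × Fin m → G)
    (hdiag : ∀ i, f (i, i) = 1) :
    ∏ p : Fin m × Fin m, f p
      = ∏ p : {p : Fin m × Fin m // p.1 < p.2}, (f p.1 * f (p.1.2, p.1.1)) := by
  classical
  have h1 := Finset.prod_filter_mul_prod_filter_not (Finset.univ : Finset (Fin m × Fin m))
    (fun p => p.1 < p.2) f
  have h2 := Finset.prod_filter_mul_prod_filter_not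
    (Finset.filter (fun p : Fin m × Fin m => ¬ p.1 < p.2) Finset.univ)
    (fun p => p.2 < p.1) f
  -- the middle (diagonal) part is 1
  have hmid : ∏ p ∈ Finset.filter (fun p : Fin m × Fin m => ¬ p.2 < p.1)
      (Finset.filter (fun p : Fin m × Fin m => ¬ p.1 < p.2) Finset.univ), f p = 1 := by
    apply Finset.prod_eq_one
    intro p hp
    simp only [Finset.mem_filter, Finset.mem_univ, true_and] at hp
    have : p.1 = p.2 := le_antisymm (not_lt.mp hp.2) (not_lt.mp hp.1)
    rw [show p = (p.1, p.1) by ext; rfl; rw [this]]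
    exact hdiag p.1
  -- the gt part equals product over lt of swapped
  have hswap : ∏ p ∈ Finset.filter (fun p : Fin m × Fin m => p.2 < p.1)
      (Finset.filter (fun p : Fin m × Fin m => ¬ p.1 < p.2) Finset.univ), f p
      = ∏ p ∈ Finset.filter (fun p : Fin m × Fin m => p.1 < p.2) Finset.univ, f (p.2, p.1) := by
    apply Finset.prod_nbij' (fun p => (p.2, p.1)) (fun p => (p.2, p.1))
    · intro a ha
      simp only [Finset.mem_filter, Finset.mem_univ, true_and] at ha ⊢
      exact ha.2
    · intro a ha
      simp only [Finset.mem_filter, Finset.mem_univ, true_and] at ha ⊢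
      exact ⟨not_lt.mpr (le_of_lt ha), ha⟩
    · intro a _; rfl
    · intro a _; rfl
    · intro a _; rfl
  rw [← h1, ← h2, hmid, mul_one, hswap, ← Finset.prod_mul_distrib]
  exact Finset.prod_subtype _ (by intro x; simp) _

lemma exists_int_clear {ι : Type*} [Fintype ι] (q : ι → ℚ) :
    ∃ (d : ℕ) (c : ι → ℤ), 0 < d ∧ ∀ i, (c i : ℚ) = d * q i := by
  classical
  refine ⟨∏ i, (q i).den, fun i => (q i).num * Int.ofNat ((∏ j, (q j).den) / (q i).den), ?_, ?_⟩
  · exact Finset.prod_pos fun i _ => (q i).pos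
  · intro i
    have hdvd : (q i).den ∣ ∏ j, (q j).den := Finset.dvd_prod_of_mem _ (Finset.mem_univ i)
    have h1 : ((q i).den : ℕ) * ((∏ j, (q j).den) / (q i).den) = ∏ j, (q j).den :=
      Nat.mul_div_cancel' hdvd
    have h2 : ((∏ j, (q j).den : ℕ) : ℚ)
        = ((q i).den : ℚ) * (((∏ j, (q j).den) / (q i).den : ℕ) : ℚ) := by
      exact_mod_cast h1.symm
    rw [h2, mul_comm ((q i).den : ℚ), mul_assoc, mul_comm ((q i).den : ℚ) (q i),
      Rat.mul_den_eq_num]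
    show ((((q i).num * Int.ofNat ((∏ j, (q j).den) / (q i).den)) : ℤ) : ℚ) = _
    rw [Int.cast_mul, Int.ofNat_eq_natCast, Int.cast_natCast, mul_comm]

def intCastLM (n : ℕ) : (Fin n → ℤ) →ₗ[ℤ] (Fin n → ℚ) where
  toFun v := fun j => (v j : ℚ)
  map_add' v w := by funext j; push_cast; simp
  map_smul' c v := by funext j; simp [zsmul_eq_mul]

lemma intCastLM_inj (n : ℕ) : Function.Injective (intCastLM n) := by
  intro v w h
  funext j
  have h2 : ((v j : ℚ)) = (w j : ℚ) := congrFun h j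
  exact_mod_cast h2

lemma exists_nsmul_mem_zspan {V : Type*} [AddCommGroup V] [Module ℚ V]
    (s : Set V) {v : V} (hv : v ∈ Submodule.span ℚ s) :
    ∃ e : ℕ, 0 < e ∧ (e : ℤ) • v ∈ Submodule.span ℤ s := by
  induction hv using Submodule.span_induction with
  | mem x hx => exact ⟨1, one_pos, by simpa using Submodule.subset_span hx⟩
  | zero => exact ⟨1, one_pos, by simp⟩
  | add x y _ _ ihx ihy =>
      obtain ⟨e, he, hex⟩ := ihx
      obtain ⟨f, hf, hfy⟩ := ihy
      refine ⟨e * f, Nat.mul_pos he hf, ?_⟩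
      have : ((e * f : ℕ) : ℤ) • (x + y) = (f : ℤ) • ((e : ℤ) • x) + (e : ℤ) • ((f : ℤ) • y) := by
        rw [smul_add, smul_smul, smul_smul]
        push_cast
        rw [mul_comm (f : ℤ) (e : ℤ)]
      rw [this]
      exact Submodule.add_mem _ (Submodule.smul_mem _ _ hex) (Submodule.smul_mem _ _ hfy)
  | smul q x _ ihx =>
      obtain ⟨e, he, hex⟩ := ihx
      refine ⟨q.den * e, Nat.mul_pos q.pos he, ?_⟩
      have : ((q.den * e : ℕ) : ℤ) • (q • x) = q.num • ((e : ℤ) • x) := by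
        rw [← Int.cast_smul_eq_zsmul ℚ ((q.den * e : ℕ) : ℤ), ← Int.cast_smul_eq_zsmul ℚ q.num,
          ← Int.cast_smul_eq_zsmul ℚ (e : ℤ), smul_smul, smul_smul]
        congr 1
        push_cast
        rw [mul_comm ((q.den : ℚ)) (e : ℚ), mul_assoc, mul_comm (q.den : ℚ) q, Rat.mul_den_eq_num]
        ring
      rw [this]
      exact Submodule.smul_mem _ _ hex


theorem rank_value_group_le_choose (F : Type*) [Field F]
    (n : ℕ) (lam : (Fin n → ℤ) → (Fin n → ℤ) → Fˣ)
    (hadd₁ : ∀ γ δ γ' : Fin n → ℤ, lam (γ + δ) γ' = lam γ γ' * lam δ γ')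
    (hadd₂ : ∀ γ γ' δ' : Fin n → ℤ, lam γ (γ' + δ') = lam γ γ' * lam γ δ')
    (halt : ∀ γ : Fin n → ℤ, lam γ γ = 1)
    (htf : ∀ u ∈ Subgroup.closure
        (Set.range fun pq : (Fin n → ℤ) × (Fin n → ℤ) => lam pq.1 pq.2),
      ∀ k : ℕ, 0 < k → u ^ k = 1 → u = 1) :
    ∀ (k : ℕ) (g : Fin k → Fˣ),
      (∀ s, g s ∈ Subgroup.closure
        (Set.range fun pq : (Fin n → ℤ) × (Fin n → ℤ) => lam pq.1 pq.2)) →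
      (∀ a : Fin k → ℤ, (∏ s, g s ^ a s) = 1 → a = 0) →
      k ≤ (n - Module.finrank ℤ
        ↥(Submodule.span ℤ {γ : Fin n → ℤ | ∀ γ' : Fin n → ℤ, lam γ γ' = 1})).choose 2 := by
  classical
  intro k g hg hindep
  set S : Set (Fin n → ℤ) := {γ : Fin n → ℤ | ∀ γ' : Fin n → ℤ, lam γ γ' = 1} with hSdef
  -- the radical is closed under the span operations
  have hS : ∀ γ ∈ Submodule.span ℤ S, ∀ γ' : Fin n → ℤ, lam γ γ' = 1 := by
    intro γ hγ
    induction hγ using Submodule.span_induction with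
    | mem x hx => exact hx
    | zero => exact fun γ' => lam_zero₁ hadd₁ γ'
    | add x y _ _ ihx ihy => intro γ'; rw [hadd₁, ihx γ', ihy γ', mul_one]
    | smul c x _ ihx => intro γ'; rw [lam_zsmul₁ hadd₁, ihx γ', one_zpow]
  -- move to ℚ
  set ZQ : Submodule ℚ (Fin n → ℚ) := Submodule.span ℚ (⇑(intCastLM n) '' S) with hZQdef
  have hmapZQ : ∀ x ∈ Submodule.span ℤ S, intCastLM n x ∈ ZQ := by
    intro x hx
    induction hx using Submodule.span_induction with
    | mem y hy => exact Submodule.subset_span ⟨y, hy, rfl⟩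
    | zero => simpa using ZQ.zero_mem
    | add y z _ _ ihy ihz => rw [map_add]; exact ZQ.add_mem ihy ihz
    | smul c y _ ihy =>
        rw [map_smul, ← Int.cast_smul_eq_zsmul ℚ]
        exact ZQ.smul_mem _ ihy
  -- rank comparison
  have hrk : Module.finrank ℤ ↥(Submodule.span ℤ S) ≤ Module.finrank ℚ ↥ZQ := by
    let B := Module.finBasis ℤ ↥(Submodule.span ℤ S)
    have hli1 : LinearIndependent ℤ (fun i => intCastLM n ((B i : Fin n → ℤ))) := by
      have h0 := B.linearIndependent
      have h1 := h0.map' (Submodule.span ℤ S).subtype (Submodule.ker_subtype _)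
      have h2 := h1.map' (intCastLM n) (LinearMap.ker_eq_bot.mpr (intCastLM_inj n))
      exact h2
    have hli2 : LinearIndependent ℚ (fun i => intCastLM n ((B i : Fin n → ℤ))) :=
      (LinearIndependent.iff_fractionRing ℤ ℚ).mp hli1
    have hmem : ∀ i, intCastLM n (B i : Fin n → ℤ) ∈ ZQ := fun i => hmapZQ _ (B i).2
    have hli3 : LinearIndependent ℚ
        (fun i => (⟨intCastLM n (B i : Fin n → ℤ), hmem i⟩ : ↥ZQ)) := by
      apply LinearIndependent.of_comp ZQ.subtype
      exact hli2
    have hcard := hli3.fintype_card_le_finrank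
    simpa using hcard
  -- complement
  obtain ⟨W, hWc⟩ := Submodule.exists_isCompl ZQ
  have hdim : Module.finrank ℚ ↥ZQ + Module.finrank ℚ ↥W = n := by
    rw [Submodule.finrank_add_eq_of_isCompl hWc, Module.finrank_pi, Fintype.card_fin]
  set m := Module.finrank ℚ ↥W with hmdef
  have hmn : m ≤ n - Module.finrank ℤ ↥(Submodule.span ℤ S) := by omega
  have u : Module.Basis (Fin m) ℚ ↥W := Module.finBasis ℚ ↥W
  -- integral vectors spanning (a finite-index subgroup of) the complement
  have hwex : ∀ i : Fin m, ∃ (N : ℕ) (wv : Fin n → ℤ), 0 < N ∧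
      ∀ j, (wv j : ℚ) = (N : ℚ) * (u i : Fin n → ℚ) j := by
    intro i
    obtain ⟨d, c, hd, hc⟩ := exists_int_clear (fun j => (u i : Fin n → ℚ) j)
    exact ⟨d, c, hd, hc⟩
  choose N w hN hw using hwex
  have hιw : ∀ i, intCastLM n (w i) = (N i : ℚ) • ((u i : Fin n → ℚ)) := by
    intro i; funext j
    rw [Pi.smul_apply, smul_eq_mul]
    exact hw i j
  -- decomposition of an arbitrary integral vector
  have hdec : ∀ γ : Fin n → ℤ, ∃ (d : ℕ) (c : Fin m → ℤ), 0 < d ∧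
      intCastLM n ((d : ℤ) • γ - ∑ i, c i • w i) ∈ ZQ := by
    intro γ
    obtain ⟨z, wp, hz, hwp, hsum0⟩ :=
      Submodule.codisjoint_iff_exists_add_eq.mp hWc.codisjoint (intCastLM n γ)
    have h0 := u.sum_repr ⟨wp, hwp⟩
    have h1 := congrArg W.subtype h0
    rw [map_sum] at h1
    simp only [map_smul] at h1
    have hrepr : ∑ i, u.repr ⟨wp, hwp⟩ i • (u i : Fin n → ℚ) = wp := h1
    obtain ⟨d, c, hd, hc⟩ := exists_int_clear (fun i => u.repr ⟨wp, hwp⟩ i / (N i : ℚ))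
    refine ⟨d, c, hd, ?_⟩
    have hcN : ∀ i, (c i : ℚ) * (N i : ℚ) = (d : ℚ) * u.repr ⟨wp, hwp⟩ i := by
      intro i
      rw [hc i]
      have hNne : (N i : ℚ) ≠ 0 := Nat.cast_ne_zero.mpr (hN i).ne'
      field_simp
    have key : intCastLM n ((d : ℤ) • γ - ∑ i, c i • w i) = (d : ℚ) • z := by
      rw [map_sub, map_smul, map_sum]
      have hterm : ∀ i, intCastLM n (c i • w i)
          = ((d : ℚ) * u.repr ⟨wp, hwp⟩ i) • (u i : Fin n → ℚ) := by
        intro i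
        rw [map_smul, hιw i, ← Int.cast_smul_eq_zsmul ℚ, smul_smul, hcN i]
      rw [Finset.sum_congr rfl (fun i _ => hterm i)]
      have hsum1 : ∑ i, ((d : ℚ) * u.repr ⟨wp, hwp⟩ i) • (u i : Fin n → ℚ)
          = (d : ℚ) • wp := by
        conv_rhs => rw [← hrepr]
        rw [Finset.smul_sum]
        exact Finset.sum_congr rfl fun i _ => by rw [mul_smul]
      rw [hsum1]
      have hz2 : (d : ℤ) • intCastLM n γ = (d : ℚ) • intCastLM n γ := by
        rw [← Int.cast_smul_eq_zsmul ℚ]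
        norm_cast
      rw [hz2, ← hsum0, smul_add]
      abel
    rw [key]
    exact ZQ.smul_mem _ hz
  -- integral vectors rationally in ZQ are radical
  have hZint : ∀ x : Fin n → ℤ, intCastLM n x ∈ ZQ → ∀ γ' : Fin n → ℤ, lam x γ' = 1 := by
    intro x hx γ'
    obtain ⟨e, he, hemem⟩ := exists_nsmul_mem_zspan _ hx
    rw [← Submodule.map_span (intCastLM n) S] at hemem
    obtain ⟨y, hy, hyx⟩ := hemem
    have hyx' : intCastLM n y = intCastLM n ((e : ℤ) • x) := by rw [map_smul]; exact hyx
    have hy2 : (e : ℤ) • x ∈ Submodule.span ℤ S := by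
      rw [← intCastLM_inj n hyx']
      exact hy
    have h1 : lam x γ' ^ (e : ℤ) = 1 := by
      rw [← lam_zsmul₁ hadd₁]
      exact hS _ hy2 γ'
    have h2 : lam x γ' ^ e = 1 := by
      rw [← zpow_natCast]
      exact h1
    exact htf (lam x γ') (Subgroup.subset_closure ⟨(x, γ'), rfl⟩) e he h2
  have hZint' : ∀ x : Fin n → ℤ, intCastLM n x ∈ ZQ → ∀ γ : Fin n → ℤ, lam γ x = 1 := by
    intro x hx γ
    rw [lam_skew hadd₁ hadd₂ halt x γ, hZint x hx γ, inv_one]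
  -- the generating values, raised to suitable powers, lie in the group generated by base
  set base : {p : Fin m × Fin m // p.1 < p.2} → Fˣ :=
    fun p => lam (w p.1.1) (w p.1.2) with hbase
  have hgen : ∀ γ γ' : Fin n → ℤ, ∃ (D : ℕ) (xe : {p : Fin m × Fin m // p.1 < p.2} → ℤ), 0 < D ∧
      lam γ γ' ^ D = ∏ p, base p ^ xe p := by
    intro γ γ'
    obtain ⟨d, c, hd, hcZ⟩ := hdec γ
    obtain ⟨d', c', hd', hcZ'⟩ := hdec γ'
    set A := ∑ i, c i • w i with hA
    set B' := ∑ i, c' i • w i with hB'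
    set z₁ := (d : ℤ) • γ - A with hz₁
    set z₂ := (d' : ℤ) • γ' - B' with hz₂
    have hγd : (d : ℤ) • γ = A + z₁ := by rw [hz₁]; abel
    have hγ'd : (d' : ℤ) • γ' = B' + z₂ := by rw [hz₂]; abel
    refine ⟨d * d', fun p => c' p.1.2 * c p.1.1 - c' p.1.1 * c p.1.2,
      Nat.mul_pos hd hd', ?_⟩
    have e2 : lam γ γ' ^ (d * d') = lam γ γ' ^ ((d' : ℤ) * (d : ℤ)) := by
      rw [← zpow_natCast]
      congr 1
      push_cast
      ring
    have e1 : lam ((d : ℤ) • γ) ((d' : ℤ) • γ') = lam γ γ' ^ ((d' : ℤ) * (d : ℤ)) := by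
      rw [lam_zsmul₁ hadd₁, lam_zsmul₂ hadd₁ hadd₂ halt, ← zpow_mul]
    have e3 : lam ((d : ℤ) • γ) ((d' : ℤ) • γ') = lam A B' := by
      rw [hγd, hγ'd, hadd₁, hZint z₁ hcZ (B' + z₂), mul_one, hadd₂,
        hZint' z₂ hcZ' A, mul_one]
    have hdiag : ∀ i : Fin m,
        (fun p : Fin m × Fin m => lam (w p.1) (w p.2) ^ (c' p.2 * c p.1)) (i, i) = 1 := by
      intro i
      simp only
      rw [halt, one_zpow]
    have e4 : lam A B' = ∏ p : {p : Fin m × Fin m // p.1 < p.2},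
        base p ^ (c' p.1.2 * c p.1.1 - c' p.1.1 * c p.1.2) := by
      rw [hA, lam_sum₁ hadd₁]
      have hterm : ∀ i, lam (c i • w i) B' = ∏ j, lam (w i) (w j) ^ (c' j * c i) := by
        intro i
        rw [lam_zsmul₁ hadd₁, hB', lam_sum₂ hadd₁ hadd₂ halt, ← Finset.prod_zpow]
        refine Finset.prod_congr rfl fun j _ => ?_
        rw [lam_zsmul₂ hadd₁ hadd₂ halt, ← zpow_mul]
      rw [Finset.prod_congr rfl (fun i _ => hterm i)]
      rw [← Fintype.prod_prod_type
        (fun p : Fin m × Fin m => lam (w p.1) (w p.2) ^ (c' p.2 * c p.1))]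
      rw [prod_pairs_fold _ hdiag]
      refine Finset.prod_congr rfl fun p _ => ?_
      simp only
      rw [lam_skew hadd₁ hadd₂ halt (w p.1.1) (w p.1.2), inv_zpow, ← zpow_neg,
        ← zpow_add, hbase, sub_eq_add_neg]
    rw [e2, ← e1, e3, e4]
  have hclos : ∀ v ∈ Subgroup.closure
      (Set.range fun pq : (Fin n → ℤ) × (Fin n → ℤ) => lam pq.1 pq.2),
      ∃ (D : ℕ) (xe : {p : Fin m × Fin m // p.1 < p.2} → ℤ), 0 < D ∧ v ^ D = ∏ p, base p ^ xe p := by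
    intro v hv
    induction hv using Subgroup.closure_induction with
    | mem x hx => obtain ⟨pq, rfl⟩ := hx; exact hgen pq.1 pq.2
    | one => exact ⟨1, 0, one_pos, by simp⟩
    | mul x y hx hy ihx ihy =>
        obtain ⟨Dx, xx, hDx, hxx⟩ := ihx
        obtain ⟨Dy, xy, hDy, hxy⟩ := ihy
        refine ⟨Dx * Dy, fun p => (Dy : ℤ) * xx p + (Dx : ℤ) * xy p,
          Nat.mul_pos hDx hDy, ?_⟩
        have h1 : (x * y) ^ (Dx * Dy) = (x ^ Dx) ^ Dy * (y ^ Dy) ^ Dx := by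
          rw [mul_pow, ← pow_mul, ← pow_mul, mul_comm Dy Dx]
        rw [h1, hxx, hxy]
        calc (∏ p, base p ^ xx p) ^ Dy * (∏ p, base p ^ xy p) ^ Dx
            = ∏ p, (base p ^ (xx p * (Dy : ℤ)) * base p ^ (xy p * (Dx : ℤ))) := by
              rw [← Finset.prod_pow, ← Finset.prod_pow, ← Finset.prod_mul_distrib]
              refine Finset.prod_congr rfl fun p _ => ?_
              rw [← zpow_natCast (base p ^ xx p) Dy, ← zpow_mul,
                ← zpow_natCast (base p ^ xy p) Dx, ← zpow_mul]
          _ = ∏ p, base p ^ ((Dy : ℤ) * xx p + (Dx : ℤ) * xy p) := by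
              refine Finset.prod_congr rfl fun p _ => ?_
              rw [← zpow_add]
              congr 1
              ring
    | inv x hx ihx =>
        obtain ⟨Dx, xx, hDx, hxx⟩ := ihx
        refine ⟨Dx, fun p => -xx p, hDx, ?_⟩
        rw [inv_pow, hxx, ← Finset.prod_inv_distrib]
        exact Finset.prod_congr rfl fun p _ => (zpow_neg _ _).symm
  choose D xe hD hxe using fun s => hclos (g s) (hg s)
  suffices hk : k ≤ Fintype.card {p : Fin m × Fin m // p.1 < p.2} by
    rw [card_lt_pairs] at hk
    exact le_trans hk (Nat.choose_le_choose 2 hmn)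
  by_contra hk'
  push_neg at hk'
  have hnli : ¬ LinearIndependent ℤ (fun s => (fun p => (xe s p : ℚ)) : Fin k → ({p : Fin m × Fin m // p.1 < p.2} → ℚ)) := by
    rw [LinearIndependent.iff_fractionRing ℤ ℚ]
    intro h
    have := h.fintype_card_le_finrank
    rw [Module.finrank_pi, Fintype.card_fin] at this
    omega
  obtain ⟨a, hsum, s₀, ha⟩ := Fintype.not_linearIndependent_iff.mp hnli
  have hcoord : ∀ p : {p : Fin m × Fin m // p.1 < p.2}, ∑ s, a s * xe s p = 0 := by
    intro p
    have h1 := congrFun hsum p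
    simp only [Finset.sum_apply, Pi.smul_apply, Pi.zero_apply] at h1
    simp only [zsmul_eq_mul] at h1
    exact_mod_cast h1
  have hone : (∏ s, g s ^ ((D s : ℤ) * a s)) = 1 := by
    have hstep : ∀ s, g s ^ ((D s : ℤ) * a s) = ∏ p, base p ^ (xe s p * a s) := by
      intro s
      rw [zpow_mul, zpow_natCast, hxe s]
      rw [← Finset.prod_zpow]
      exact Finset.prod_congr rfl fun p _ => by rw [← zpow_mul]
    calc (∏ s, g s ^ ((D s : ℤ) * a s)) = ∏ s, ∏ p, base p ^ (xe s p * a s) :=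
          Finset.prod_congr rfl fun s _ => hstep s
      _ = ∏ p, ∏ s, base p ^ (xe s p * a s) := Finset.prod_comm
      _ = ∏ p : {p : Fin m × Fin m // p.1 < p.2}, (base p) ^ (∑ s, xe s p * a s) :=
          Finset.prod_congr rfl fun p _ => (zpow_finset_sum _ _ _).symm
      _ = 1 := by
          apply Finset.prod_eq_one
          intro p _
          have : ∑ s, xe s p * a s = 0 := by
            rw [← hcoord p]
            exact Finset.sum_congr rfl fun s _ => mul_comm _ _
          rw [this, zpow_zero]
  have hz := hindep _ hone
  have hz₀ := congrFun hz s₀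
  simp only [Pi.zero_apply, mul_eq_zero] at hz₀
  rcases hz₀ with h | h
  · exact absurd h (by exact_mod_cast (hD s₀).ne')
  · exact ha h
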